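/- arXiv:1805.07482 — 5 statements merged into one kernel-verified Lean document; each statement's English description precedes it below -/
import Mathlib

section
/- If F is a submodular set function on a finite ground set V, then its multilinear extension f(x) = E_{S~q(·|x)}[F(S)], where q(S|x) = ∏_{i∈S} x_i ∏_{j∉S} (1-x_j), is continuous DR-submodular on [0,1]^n; i.e., for all a ≤ b in [0,1]^n, all coordinates i, and all k ≥ 0 with k e_i + b ∈ [0,1]^n, f(k e_i + a) − f(a) ≥ f(k e_i + b) − f(b). -/
open Finset

/-- The multilinear extension of a set function `F` on ground set `Fin n`. -/
noncomputable def multilinearExt (n : ℕ) (F : Finset (Fin n) → ℝ) (x : Fin n → ℝ) : ℝ :=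
  ∑ S : Finset (Fin n), F S * ((∏ i ∈ S, x i) * ∏ j ∈ Sᶜ, (1 - x j))

/-- Discrete derivative of the multilinear extension in coordinate `i`. -/
noncomputable def dri (n : ℕ) (F : Finset (Fin n) → ℝ) (i : Fin n) (x : Fin n → ℝ) : ℝ :=
  ∑ S ∈ ((univ : Finset (Fin n)).erase i).powerset,
    (F (insert i S) - F S) * ((∏ j ∈ S, x j) * ∏ j ∈ Sᶜ.erase i, (1 - x j))

lemma pair_sum (n : ℕ) (g : Finset (Fin n) → ℝ) (i : Fin n) :
    ∑ S : Finset (Fin n), g S =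
      ∑ S ∈ ((univ : Finset (Fin n)).erase i).powerset, (g S + g (insert i S)) := by
  conv_lhs => rw [← powerset_univ, ← insert_erase (mem_univ i)]
  rw [sum_powerset_insert (notMem_erase i univ), sum_add_distrib]

lemma split_lemma (n : ℕ) (F : Finset (Fin n) → ℝ) (i : Fin n) (x : Fin n → ℝ) :
    multilinearExt n F x = ∑ S ∈ ((univ : Finset (Fin n)).erase i).powerset,
      ((1 - x i) * F S + x i * F (insert i S)) *
        ((∏ j ∈ S, x j) * ∏ j ∈ Sᶜ.erase i, (1 - x j)) := by
  rw [multilinearExt, pair_sum n _ i]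
  apply sum_congr rfl
  intro S hS
  have hiS : i ∉ S := fun h =>
    (mem_erase.mp (mem_powerset.mp hS h)).1 rfl
  have hic : i ∈ Sᶜ := mem_compl.mpr hiS
  rw [compl_insert, prod_insert hiS, ← mul_prod_erase _ _ hic]
  ring

lemma diff_eq (n : ℕ) (F : Finset (Fin n) → ℝ) (i : Fin n) (k : ℝ) (x : Fin n → ℝ) :
    multilinearExt n F (k • (Pi.single i (1:ℝ) : Fin n → ℝ) + x) - multilinearExt n F x =
      k * dri n F i x := by
  have hx : ∀ j, j ≠ i → (k • (Pi.single i (1:ℝ) : Fin n → ℝ) + x) j = x j := by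
    intro j hj; simp [Pi.single_eq_of_ne hj]
  have hxi : (k • (Pi.single i (1:ℝ) : Fin n → ℝ) + x) i = k + x i := by simp
  rw [split_lemma n F i x, split_lemma n F i _, dri, ← sum_sub_distrib, mul_sum]
  apply sum_congr rfl
  intro S hS
  have hiS : ∀ j ∈ S, j ≠ i := fun j hj =>
    (mem_erase.mp (mem_powerset.mp hS hj)).1
  have h1 : ∏ j ∈ S, (k • (Pi.single i (1:ℝ) : Fin n → ℝ) + x) j = ∏ j ∈ S, x j :=
    prod_congr rfl fun j hj => hx j (hiS j hj)
  have h2 : ∏ j ∈ Sᶜ.erase i, (1 - (k • (Pi.single i (1:ℝ) : Fin n → ℝ) + x) j)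
      = ∏ j ∈ Sᶜ.erase i, (1 - x j) :=
    prod_congr rfl fun j hj => by rw [hx j (mem_erase.mp hj).1]
  rw [h1, h2, hxi]
  ring

lemma dri_congr (n : ℕ) (F : Finset (Fin n) → ℝ) (i : Fin n) (x y : Fin n → ℝ)
    (h : ∀ j, j ≠ i → x j = y j) : dri n F i x = dri n F i y := by
  apply sum_congr rfl
  intro S hS
  have hiS : ∀ j ∈ S, j ≠ i := fun j hj =>
    (mem_erase.mp (mem_powerset.mp hS hj)).1
  have p1 : ∏ j ∈ S, x j = ∏ j ∈ S, y j :=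
    prod_congr rfl fun j hj => h j (hiS j hj)
  have p2 : ∏ j ∈ Sᶜ.erase i, (1 - x j) = ∏ j ∈ Sᶜ.erase i, (1 - y j) :=
    prod_congr rfl fun j hj => by rw [h j (mem_erase.mp hj).1]
  rw [p1, p2]

lemma dri_mono_coord (n : ℕ) (F : Finset (Fin n) → ℝ)
    (hsub : ∀ A B : Finset (Fin n), F (A ∪ B) + F (A ∩ B) ≤ F A + F B)
    (i t : Fin n) (ht : t ≠ i) (x y : Fin n → ℝ)
    (hxy : ∀ j, j ≠ t → x j = y j) (hxt : x t ≤ y t)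
    (h0 : ∀ j, 0 ≤ x j) (h1 : ∀ j, x j ≤ 1)
    (h0y : 0 ≤ y t) (h1y : y t ≤ 1) :
    dri n F i y ≤ dri n F i x := by
  have htA : t ∈ (univ : Finset (Fin n)).erase i := mem_erase.mpr ⟨ht, mem_univ t⟩
  have htA' : t ∉ ((univ : Finset (Fin n)).erase i).erase t := notMem_erase t _
  rw [← sub_nonneg, dri, dri, ← insert_erase htA, sum_powerset_insert htA', sum_powerset_insert htA']
  rw [← sum_add_distrib, ← sum_add_distrib, ← sum_sub_distrib]
  apply sum_nonneg
  intro S hS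
  have hSsub := mem_powerset.mp hS
  have hiS : i ∉ S := fun h => (mem_erase.mp (mem_erase.mp (hSsub h)).2).1 rfl
  have htS : t ∉ S := fun h => (mem_erase.mp (hSsub h)).1 rfl
  have htc : t ∈ Sᶜ.erase i := mem_erase.mpr ⟨ht, mem_compl.mpr htS⟩
  -- rewrite the four product terms
  have hcompl : ((insert t S)ᶜ).erase i = (Sᶜ.erase i).erase t := by
    ext j
    simp only [compl_insert, mem_erase, mem_compl]
    tauto
  set R : (Fin n → ℝ) → ℝ := fun z => (∏ j ∈ S, z j) * ∏ j ∈ (Sᶜ.erase i).erase t, (1 - z j)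
    with hR
  have hQ1 : ∀ z : Fin n → ℝ, (∏ j ∈ S, z j) * ∏ j ∈ Sᶜ.erase i, (1 - z j)
      = (1 - z t) * R z := by
    intro z; rw [hR, ← mul_prod_erase _ _ htc]; ring
  have hQ2 : ∀ z : Fin n → ℝ, (∏ j ∈ insert t S, z j) * ∏ j ∈ ((insert t S)ᶜ).erase i, (1 - z j)
      = z t * R z := by
    intro z; rw [hcompl, prod_insert htS, hR]; ring
  have hRxy : R x = R y := by
    simp only [hR]
    have p1 : ∏ j ∈ S, x j = ∏ j ∈ S, y j :=
      prod_congr rfl fun j hj => hxy j (fun h => htS (h ▸ hj))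
    have p2 : ∏ j ∈ (Sᶜ.erase i).erase t, (1 - x j) = ∏ j ∈ (Sᶜ.erase i).erase t, (1 - y j) :=
      prod_congr rfl fun j hj => by rw [hxy j (mem_erase.mp hj).1]
    rw [p1, p2]
  have hRnn : 0 ≤ R x := by
    apply mul_nonneg
    · exact prod_nonneg fun j _ => h0 j
    · exact prod_nonneg fun j _ => by linarith [h1 j]
  rw [hQ1 x, hQ2 x, hQ1 y, hQ2 y, ← hRxy]
  have hC : F (insert i (insert t S)) + F S ≤ F (insert i S) + F (insert t S) := by
    have hu : insert i S ∪ insert t S = insert i (insert t S) := by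
      rw [insert_union, union_insert, union_self]
    have hi : insert i S ∩ insert t S = S := by
      ext j
      simp only [mem_inter, mem_insert]
      constructor
      · rintro ⟨hj1 | hj1, hj2 | hj2⟩
        · exact absurd (hj2.symm.trans hj1) ht
        · exact hj2
        · exact hj1
        · exact hj1
      · exact fun hj => ⟨Or.inr hj, Or.inr hj⟩
    have := hsub (insert i S) (insert t S)
    rw [hu, hi] at this
    linarith
  have key : (F (insert i S) - F S) * ((1 - x t) * R x) +
        (F (insert i (insert t S)) - F (insert t S)) * (x t * R x) -
      ((F (insert i S) - F S) * ((1 - y t) * R x) +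
        (F (insert i (insert t S)) - F (insert t S)) * (y t * R x)) =
      (y t - x t) * (((F (insert i S) - F S) -
        (F (insert i (insert t S)) - F (insert t S))) * R x) := by ring
  rw [key]
  apply mul_nonneg (by linarith)
  apply mul_nonneg (by linarith) hRnn

lemma dri_mono (n : ℕ) (F : Finset (Fin n) → ℝ)
    (hsub : ∀ A B : Finset (Fin n), F (A ∪ B) + F (A ∩ B) ≤ F A + F B)
    (a b : Fin n → ℝ) (hab : a ≤ b)
    (ha : ∀ j, 0 ≤ a j) (hb : ∀ j, b j ≤ 1) (i : Fin n) :
    dri n F i b ≤ dri n F i a := by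
  have key : ∀ T : Finset (Fin n),
      dri n F i (fun j => if j ∈ T then b j else a j) ≤ dri n F i a := by
    intro T
    induction T using Finset.induction_on with
    | empty => simp
    | @insert t T htT ih =>
      refine le_trans ?_ ih
      set x : Fin n → ℝ := fun j => if j ∈ T then b j else a j with hx
      set y : Fin n → ℝ := fun j => if j ∈ insert t T then b j else a j with hy
      have hxy : ∀ j, j ≠ t → x j = y j := by
        intro j hj
        simp only [hx, hy, mem_insert]
        by_cases h : j ∈ T <;> simp [h, hj]
      have hxt : x t ≤ y t := by
        simp only [hx, hy, mem_insert, htT, if_neg htT, if_pos (Or.inl rfl)]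
        exact hab t
      by_cases hti : t = i
      · exact le_of_eq (dri_congr n F i y x (fun j hj => (hxy j (hti ▸ hj)).symm))
      · refine dri_mono_coord n F hsub i t hti x y hxy hxt ?_ ?_ ?_ ?_
        · intro j; by_cases h : j ∈ T <;> simp only [hx, h, if_pos, if_neg, if_true, if_false]
          · exact le_trans (ha j) (hab j)
          · exact ha j
        · intro j; by_cases h : j ∈ T <;> simp only [hx, h, if_pos, if_neg, if_true, if_false]
          · exact hb j
          · exact le_trans (hab j) (hb j)
        · simp only [hy, mem_insert, if_pos (Or.inl rfl)]
          exact le_trans (ha t) (hab t)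
        · simp only [hy, mem_insert, if_pos (Or.inl rfl)]
          exact hb t
  have := key univ
  simpa using this

/-- The multilinear extension of a submodular set function is continuous DR-submodular
on `[0,1]^n`. -/
theorem multilinear_ext_of_submodular_is_DR_submodular
    (n : ℕ) (F : Finset (Fin n) → ℝ)
    (hsub : ∀ A B : Finset (Fin n), F (A ∪ B) + F (A ∩ B) ≤ F A + F B)
    (a b : Fin n → ℝ) (hab : a ≤ b)
    (ha : ∀ j, 0 ≤ a j) (hb : ∀ j, b j ≤ 1)
    (i : Fin n) (k : ℝ) (hk : 0 ≤ k)
    (hbk : ∀ j, (k • (Pi.single i (1:ℝ) : Fin n → ℝ) + b) j ≤ 1) :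
    multilinearExt n F (k • (Pi.single i (1:ℝ) : Fin n → ℝ) + b) - multilinearExt n F b ≤
      multilinearExt n F (k • (Pi.single i (1:ℝ) : Fin n → ℝ) + a) - multilinearExt n F a := by
  rw [diff_eq, diff_eq]
  exact mul_le_mul_of_nonneg_left (dri_mono n F hsub a b hab ha hb i) hk
end

section
/- If f : ℝ^n → ℝ is differentiable with antitone gradient (a ≤ b ⟹ ∇f(a) ≥ ∇f(b) componentwise), then f satisfies the diminishing-returns property: for all a ≤ b, all i, and all k ≥ 0, f(a + k e_i) − f(a) ≥ f(b + k e_i) − f(b). -/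
lemma line_hasDerivAt (n : ℕ) (f : (Fin n → ℝ) → ℝ) (hf : Differentiable ℝ f)
    (c e : Fin n → ℝ) (t : ℝ) :
    HasDerivAt (fun s : ℝ => f (c + s • e)) (fderiv ℝ f (c + t • e) e) t := by
  have h1 : HasDerivAt (fun s : ℝ => c + s • e) e t := by
    simpa using ((hasDerivAt_id t).smul_const e).const_add c
  exact ((hf (c + t • e)).hasFDerivAt.comp_hasDerivAt t h1)

/-- A differentiable function with antitone gradient satisfies the
diminishing-returns property. -/
theorem antitone_gradient_implies_DR
    (n : ℕ) (f : (Fin n → ℝ) → ℝ) (hf : Differentiable ℝ f)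
    (hgrad : ∀ a b : Fin n → ℝ, a ≤ b → ∀ i : Fin n,
      fderiv ℝ f b (Pi.single i (1:ℝ)) ≤ fderiv ℝ f a (Pi.single i (1:ℝ))) :
    ∀ a b : Fin n → ℝ, a ≤ b → ∀ i : Fin n, ∀ k : ℝ, 0 ≤ k →
      f (b + k • (Pi.single i (1:ℝ) : Fin n → ℝ)) - f b ≤
        f (a + k • (Pi.single i (1:ℝ) : Fin n → ℝ)) - f a := by
  intro a b hab i k hk
  set e : Fin n → ℝ := Pi.single i (1:ℝ) with he
  set g : ℝ → ℝ := fun s => f (b + s • e) - f (a + s • e) with hg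
  have hder : ∀ t : ℝ, HasDerivAt g
      (fderiv ℝ f (b + t • e) e - fderiv ℝ f (a + t • e) e) t := fun t =>
    (line_hasDerivAt n f hf b e t).sub (line_hasDerivAt n f hf a e t)
  have hmono : Antitone g := by
    apply antitone_of_deriv_nonpos
    · exact fun t => (hder t).differentiableAt
    · intro t
      rw [(hder t).deriv]
      have hle : a + t • e ≤ b + t • e := fun j => by
        simpa using add_le_add_right (hab j) (t * e j)
      have := hgrad (a + t • e) (b + t • e) hle i
      simpa [he] using sub_nonpos.mpr this
  have := hmono hk
  simp only [hg, zero_smul, add_zero] at this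
  linarith
end

section
/- Let f be DR-submodular on [a,b] ⊆ ℝ^n, x ≤ y in [a,b] with x_i = a_i and y_i = b_i for a coordinate i. Let u_a maximize u ↦ f(x with coordinate i set to u) up to additive error δ/n and u_b maximize u ↦ f(y with coordinate i set to u) up to additive error δ/n. Then f(x with coordinate i set to u_b) − f(x) ≥ −δ/n and f(y with coordinate i set to u_a) − f(y) ≥ −δ/n. -/
/-- `f` is continuous DR-submodular on the box `[a,b]`. -/
def DRSubmodularOn (n : ℕ) (f : (Fin n → ℝ) → ℝ) (a b : Fin n → ℝ) : Prop :=
  ∀ u v : Fin n → ℝ, a ≤ u → u ≤ v → v ≤ b → ∀ j : Fin n, ∀ k : ℝ, 0 ≤ k →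
    v + k • (Pi.single j (1:ℝ) : Fin n → ℝ) ≤ b →
    f (v + k • (Pi.single j (1:ℝ) : Fin n → ℝ)) - f v ≤
      f (u + k • (Pi.single j (1:ℝ) : Fin n → ℝ)) - f u

lemma add_single_eq_update (n : ℕ) (x : Fin n → ℝ) (i : Fin n) (c : ℝ) :
    x + (c - x i) • (Pi.single i (1:ℝ) : Fin n → ℝ) = Function.update x i c := by
  funext j
  by_cases h : j = i
  · subst h; simp
  · simp [Function.update_of_ne h, Pi.single_eq_of_ne h]

/-- Lemma 1 of the paper: flipping the approximate 1-D maximizers between the lower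
iterate `x` and the upper iterate `y` decreases the objective by at most `δ/n`. -/
theorem dr_double_greedy_flip_lemma
    (n : ℕ) (f : (Fin n → ℝ) → ℝ) (a b : Fin n → ℝ) (hab : a ≤ b)
    (hDR : DRSubmodularOn n f a b)
    (x y : Fin n → ℝ) (hax : a ≤ x) (hxy : x ≤ y) (hyb : y ≤ b)
    (i : Fin n) (hxi : x i = a i) (hyi : y i = b i)
    (δ : ℝ) (hδ : 0 ≤ δ)
    (ua ub : ℝ) (hua : ua ∈ Set.Icc (a i) (b i)) (hub : ub ∈ Set.Icc (a i) (b i))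
    (hua_opt : ∀ u ∈ Set.Icc (a i) (b i),
      f (Function.update x i u) ≤ f (Function.update x i ua) + δ / n)
    (hub_opt : ∀ u ∈ Set.Icc (a i) (b i),
      f (Function.update y i u) ≤ f (Function.update y i ub) + δ / n) :
    f (Function.update x i ub) - f x ≥ -(δ / n) ∧
      f (Function.update y i ua) - f y ≥ -(δ / n) := by
  constructor
  · -- use DR with u := x, v := update y i (a i), k := ub - a i
    set v : Fin n → ℝ := Function.update y i (a i) with hv
    have hxv : x ≤ v := by
      intro j
      by_cases h : j = i
      · subst h; simp [hv, hxi]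
      · simp [hv, Function.update_of_ne h]; exact hxy j
    have hvb : v ≤ b := by
      intro j
      by_cases h : j = i
      · subst h; simp [hv]; exact hab j
      · simp [hv, Function.update_of_ne h]; exact hyb j
    have hk : (0:ℝ) ≤ ub - a i := sub_nonneg.mpr hub.1
    have hxk : x + (ub - a i) • (Pi.single i (1:ℝ) : Fin n → ℝ) = Function.update x i ub := by
      rw [← hxi]; exact add_single_eq_update n x i ub
    have hvk : v + (ub - a i) • (Pi.single i (1:ℝ) : Fin n → ℝ) = Function.update y i ub := by
      have : v i = a i := by simp [hv]
      rw [← this]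
      rw [add_single_eq_update n v i ub, hv, Function.update_idem]
    have hub_le_b : Function.update y i ub ≤ b := by
      intro j
      by_cases h : j = i
      · subst h; simpa using hub.2
      · simp [Function.update_of_ne h]; exact hyb j
    have hDR' := hDR x v hax hxv hvb i (ub - a i) hk (by rw [hvk]; exact hub_le_b)
    rw [hxk, hvk] at hDR'
    have hopt := hub_opt (a i) ⟨le_refl _, hab i⟩
    have : f (Function.update y i ub) - f v ≥ -(δ / n) := by
      rw [hv]; linarith
    linarith
  · -- use DR with u := update x i ua, v := update y i ua, k := b i - ua
    set u : Fin n → ℝ := Function.update x i ua with hu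
    set v : Fin n → ℝ := Function.update y i ua with hv
    have hau : a ≤ u := by
      intro j
      by_cases h : j = i
      · subst h; simpa [hu] using hua.1
      · simp [hu, Function.update_of_ne h]; exact hax j
    have huv : u ≤ v := by
      intro j
      by_cases h : j = i
      · subst h; simp [hu, hv]
      · simp [hu, hv, Function.update_of_ne h]; exact hxy j
    have hvb : v ≤ b := by
      intro j
      by_cases h : j = i
      · subst h; simpa [hv] using hua.2
      · simp [hv, Function.update_of_ne h]; exact hyb j
    have hk : (0:ℝ) ≤ b i - ua := sub_nonneg.mpr hua.2
    have huk : u + (b i - ua) • (Pi.single i (1:ℝ) : Fin n → ℝ) = Function.update x i (b i) := by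
      have : u i = ua := by simp [hu]
      rw [← this, add_single_eq_update n u i (b i), hu, Function.update_idem]
    have hvk : v + (b i - ua) • (Pi.single i (1:ℝ) : Fin n → ℝ) = y := by
      have : v i = ua := by simp [hv]
      rw [← this, add_single_eq_update n v i (b i), hv, Function.update_idem, ← hyi,
        Function.update_eq_self]
    have hyb' : y ≤ b := hyb
    have hDR' := hDR u v hau huv hvb i (b i - ua) hk (by rw [hvk]; exact hyb')
    rw [huk, hvk] at hDR'
    have hopt := hua_opt (b i) ⟨hab i, le_refl _⟩
    rw [hu, hv] at hDR'
    linarith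
end

section
/- For the FLID objective F(S) = ∑_{i∈S} u'_i + ∑_{d=1}^D max_{i∈S} W_{i,d} (with max over the empty set equal to 0), if for dimension d the indices are sorted so that W_{i_d(1),d} ≤ ... ≤ W_{i_d(n),d}, then the multilinear extension equals f̃(x) = ∑_i u'_i x_i + ∑_{d=1}^D ∑_{l=1}^n W_{i_d(l),d} · x_{i_d(l)} · ∏_{m=l+1}^n (1 − x_{i_d(m)}). -/
open Finset

/-- Maximum of `g` over a finite set, with the convention `max ∅ = 0`. -/
noncomputable def finsetMax0 {α : Type*} (S : Finset α) (g : α → ℝ) : ℝ :=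
  if h : S.Nonempty then S.sup' h g else 0

lemma lemC {n : ℕ} (x : Fin n → ℝ) (P Q : Finset (Fin n)) (hPQ : Disjoint P Q) :
    ∑ S ∈ Finset.univ.filter (fun S : Finset (Fin n) => P ⊆ S ∧ Disjoint S Q),
      ((∏ i ∈ S, x i) * ∏ j ∈ Sᶜ, (1 - x j)) =
    (∏ i ∈ P, x i) * ∏ j ∈ Q, (1 - x j) := by
  classical
  set R := (P ∪ Q)ᶜ with hR
  have hPR : Disjoint P R := disjoint_compl_right.mono_left Finset.subset_union_left
  have hQR : Disjoint Q R := disjoint_compl_right.mono_left Finset.subset_union_right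
  have key : ∑ S ∈ Finset.univ.filter (fun S : Finset (Fin n) => P ⊆ S ∧ Disjoint S Q),
      ((∏ i ∈ S, x i) * ∏ j ∈ Sᶜ, (1 - x j)) =
      ∑ T ∈ R.powerset, ((∏ i ∈ P ∪ T, x i) * ∏ j ∈ (P ∪ T)ᶜ, (1 - x j)) := by
    refine (Finset.sum_nbij' (fun T => P ∪ T) (fun S => S ∩ R) ?_ ?_ ?_ ?_ ?_).symm
    · intro T hT
      simp only [Finset.mem_powerset] at hT
      simp only [Finset.mem_filter, Finset.mem_univ, true_and]
      exact ⟨Finset.subset_union_left,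
        Finset.disjoint_union_left.mpr ⟨hPQ, Finset.disjoint_of_subset_left hT hQR.symm⟩⟩
    · intro S hS
      simp only [Finset.mem_filter, Finset.mem_univ, true_and] at hS
      simp [Finset.mem_powerset]
    · intro T hT
      simp only [Finset.mem_powerset] at hT
      show (P ∪ T) ∩ R = T
      rw [Finset.union_inter_distrib_right,
        Finset.disjoint_iff_inter_eq_empty.mp hPR, Finset.empty_union]
      exact Finset.inter_eq_left.mpr hT
    · intro S hS
      simp only [Finset.mem_filter, Finset.mem_univ, true_and] at hS
      obtain ⟨hPS, hSQ⟩ := hS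
      show P ∪ (S ∩ R) = S
      ext a
      simp only [Finset.mem_union, Finset.mem_inter, hR, Finset.mem_compl, Finset.mem_union]
      constructor
      · rintro (h | ⟨h, _⟩)
        · exact hPS h
        · exact h
      · intro ha
        by_cases hp : a ∈ P
        · exact Or.inl hp
        · exact Or.inr ⟨ha, not_or.mpr ⟨hp, fun hq => (Finset.disjoint_left.mp hSQ ha) hq⟩⟩
    · intro T hT; rfl
  rw [key]
  have compl_eq : ∀ T ∈ R.powerset, (P ∪ T)ᶜ = Q ∪ (R \ T) := by
    intro T hT
    simp only [Finset.mem_powerset] at hT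
    ext a
    simp only [Finset.mem_compl, Finset.mem_union, Finset.mem_sdiff, hR]
    constructor
    · intro h
      push_neg at h
      obtain ⟨hp, ht⟩ := h
      by_cases hq : a ∈ Q
      · exact Or.inl hq
      · exact Or.inr ⟨by simp [hR, hp, hq], ht⟩
    · rintro (h | ⟨h, ht⟩)
      · push_neg
        exact ⟨fun hp => (Finset.disjoint_left.mp hPQ hp) h,
          fun htT => (Finset.disjoint_left.mp hQR h) (hT htT)⟩
      · push_neg at h ⊢
        exact ⟨h.1, ht⟩
  calc ∑ T ∈ R.powerset, ((∏ i ∈ P ∪ T, x i) * ∏ j ∈ (P ∪ T)ᶜ, (1 - x j))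
      = ∑ T ∈ R.powerset, ((∏ i ∈ P, x i) * ∏ j ∈ Q, (1 - x j)) *
          ((∏ i ∈ T, x i) * ∏ j ∈ R \ T, (1 - x j)) := by
        refine Finset.sum_congr rfl fun T hT => ?_
        have hTR : T ⊆ R := Finset.mem_powerset.mp hT
        rw [compl_eq T hT, Finset.prod_union (Finset.disjoint_of_subset_right hTR hPR),
          Finset.prod_union (Finset.disjoint_of_subset_right Finset.sdiff_subset hQR)]
        ring
    _ = ((∏ i ∈ P, x i) * ∏ j ∈ Q, (1 - x j)) *
          ∑ T ∈ R.powerset, ((∏ i ∈ T, x i) * ∏ j ∈ R \ T, (1 - x j)) := by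
        rw [Finset.mul_sum]
    _ = (∏ i ∈ P, x i) * ∏ j ∈ Q, (1 - x j) := by
        rw [← Finset.prod_add,
          Finset.prod_congr rfl (fun i _ => by ring : ∀ i ∈ R, x i + (1 - x i) = (1:ℝ)),
          Finset.prod_const_one, mul_one]

lemma maxdecomp {n : ℕ} (σ : Fin n ≃ Fin n) (g : Fin n → ℝ)
    (hmono : ∀ l m : Fin n, l ≤ m → g (σ l) ≤ g (σ m)) (S : Finset (Fin n)) :
    finsetMax0 S g = ∑ l : Fin n, g (σ l) *
      (if σ l ∈ S ∧ ∀ m, l < m → σ m ∉ S then 1 else 0) := by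
  classical
  by_cases hS : S.Nonempty
  · have hT : (S.image σ.symm).Nonempty := hS.image _
    set L := (S.image σ.symm).max' hT with hL
    have hLmem : σ L ∈ S := by
      have := Finset.max'_mem _ hT
      simp only [Finset.mem_image] at this
      obtain ⟨a, ha, hae⟩ := this
      rw [hL, ← hae, Equiv.apply_symm_apply]
      exact ha
    have hLmax : ∀ m, L < m → σ m ∉ S := by
      intro m hm hmS
      have : σ.symm (σ m) ∈ S.image σ.symm := Finset.mem_image_of_mem _ hmS
      rw [Equiv.symm_apply_apply] at this
      exact absurd (Finset.le_max' _ _ this) (not_le.mpr hm)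
    have hval : finsetMax0 S g = g (σ L) := by
      rw [finsetMax0, dif_pos hS]
      apply le_antisymm
      · apply Finset.sup'_le
        intro i hi
        have : σ.symm i ∈ S.image σ.symm := Finset.mem_image_of_mem _ hi
        have hle := Finset.le_max' _ _ this
        have := hmono _ _ hle
        rwa [Equiv.apply_symm_apply] at this
      · exact Finset.le_sup' g hLmem
    rw [hval]
    rw [Finset.sum_eq_single L]
    · rw [if_pos ⟨hLmem, hLmax⟩, mul_one]
    · intro l _ hlL
      rw [if_neg, mul_zero]
      rintro ⟨hl1, hl2⟩
      rcases lt_trichotomy l L with h | h | h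
      · exact hl2 L h hLmem
      · exact hlL h
      · have : l ∈ S.image σ.symm := by
          refine Finset.mem_image.mpr ⟨σ l, hl1, Equiv.symm_apply_apply _ _⟩
        exact absurd (Finset.le_max' _ _ this) (not_le.mpr h)
    · intro h; exact absurd (Finset.mem_univ L) h
  · rw [finsetMax0, dif_neg hS]
    rw [Finset.not_nonempty_iff_eq_empty] at hS
    subst hS
    simp

/-- Multilinear extension of the FLID objective
`F(S) = ∑_{i∈S} u'_i + ∑_d max_{i∈S} W_{i,d}`: after sorting each column `d` of `W`
nondecreasingly via the permutation `perm d`, it equals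
`∑_i u'_i x_i + ∑_d ∑_l W_{i_d(l),d} x_{i_d(l)} ∏_{m>l} (1 − x_{i_d(m)})`. -/
theorem multilinear_ext_FLID
    (n D : ℕ) (W : Fin n → Fin D → ℝ) (hW : ∀ i d, 0 ≤ W i d) (u' : Fin n → ℝ)
    (perm : Fin D → (Fin n ≃ Fin n))
    (hsorted : ∀ d : Fin D, ∀ l m : Fin n, l ≤ m → W (perm d l) d ≤ W (perm d m) d)
    (F : Finset (Fin n) → ℝ)
    (hF : ∀ S, F S = (∑ i ∈ S, u' i) + ∑ d : Fin D, finsetMax0 S (fun i => W i d))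
    (x : Fin n → ℝ) :
    multilinearExt n F x =
      (∑ i : Fin n, u' i * x i) +
        ∑ d : Fin D, ∑ l : Fin n,
          W (perm d l) d * x (perm d l) *
            ∏ m ∈ Finset.univ.filter (fun m : Fin n => l < m), (1 - x (perm d m)) := by
  classical
  unfold multilinearExt
  have split : ∀ S : Finset (Fin n),
      F S * ((∏ i ∈ S, x i) * ∏ j ∈ Sᶜ, (1 - x j)) =
      (∑ i ∈ S, u' i) * ((∏ i ∈ S, x i) * ∏ j ∈ Sᶜ, (1 - x j)) +
      ∑ d : Fin D, finsetMax0 S (fun i => W i d) * ((∏ i ∈ S, x i) * ∏ j ∈ Sᶜ, (1 - x j)) := by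
    intro S
    rw [hF S, add_mul]
    congr 1
    rw [Finset.sum_mul]
  rw [Finset.sum_congr rfl (fun S _ => split S), Finset.sum_add_distrib]
  congr 1
  · -- linear part
    have : ∀ S : Finset (Fin n),
        (∑ i ∈ S, u' i) * ((∏ i ∈ S, x i) * ∏ j ∈ Sᶜ, (1 - x j)) =
        ∑ i : Fin n, (if i ∈ S then u' i * ((∏ i ∈ S, x i) * ∏ j ∈ Sᶜ, (1 - x j)) else 0) := by
      intro S
      rw [Finset.sum_ite_mem, Finset.univ_inter, Finset.sum_mul]
    rw [Finset.sum_congr rfl (fun S _ => this S), Finset.sum_comm]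
    refine Finset.sum_congr rfl fun i _ => ?_
    rw [Finset.sum_ite, Finset.sum_const_zero, add_zero, ← Finset.mul_sum]
    have heq : (Finset.univ.filter (fun S : Finset (Fin n) => i ∈ S)) =
        (Finset.univ.filter (fun S : Finset (Fin n) => {i} ⊆ S ∧ Disjoint S (∅ : Finset (Fin n)))) := by
      apply Finset.filter_congr
      intro S _
      simp
    rw [heq, lemC x {i} ∅ (Finset.disjoint_empty_right _)]
    simp
  · -- max part
    rw [Finset.sum_comm]
    refine Finset.sum_congr rfl fun d _ => ?_
    have hmd : ∀ l m : Fin n, l ≤ m →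
        (fun i => W i d) (perm d l) ≤ (fun i => W i d) (perm d m) := hsorted d
    have step : ∀ S : Finset (Fin n),
        finsetMax0 S (fun i => W i d) * ((∏ i ∈ S, x i) * ∏ j ∈ Sᶜ, (1 - x j)) =
        ∑ l : Fin n, W (perm d l) d *
          ((if perm d l ∈ S ∧ ∀ m, l < m → perm d m ∉ S then 1 else 0) *
            ((∏ i ∈ S, x i) * ∏ j ∈ Sᶜ, (1 - x j))) := by
      intro S
      rw [maxdecomp (perm d) (fun i => W i d) hmd S, Finset.sum_mul]
      refine Finset.sum_congr rfl fun l _ => ?_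
      ring
    rw [Finset.sum_congr rfl (fun S _ => step S), Finset.sum_comm]
    refine Finset.sum_congr rfl fun l _ => ?_
    rw [← Finset.mul_sum]
    have inner : ∑ S : Finset (Fin n),
        (if perm d l ∈ S ∧ ∀ m, l < m → perm d m ∉ S then 1 else 0) *
          ((∏ i ∈ S, x i) * ∏ j ∈ Sᶜ, (1 - x j)) =
        x (perm d l) * ∏ m ∈ Finset.univ.filter (fun m : Fin n => l < m), (1 - x (perm d m)) := by
      simp only [ite_mul, one_mul, zero_mul]
      rw [Finset.sum_ite, Finset.sum_const_zero, add_zero]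
      set Ml : Finset (Fin n) := (Finset.univ.filter (fun m : Fin n => l < m)).image (perm d) with hMl
      have heq : (Finset.univ.filter
          (fun S : Finset (Fin n) => perm d l ∈ S ∧ ∀ m, l < m → perm d m ∉ S)) =
          (Finset.univ.filter
          (fun S : Finset (Fin n) => {perm d l} ⊆ S ∧ Disjoint S Ml)) := by
        apply Finset.filter_congr
        intro S _
        simp only [Finset.singleton_subset_iff, hMl, Finset.disjoint_left, Finset.mem_image,
          Finset.mem_filter, Finset.mem_univ, true_and]
        constructor
        · rintro ⟨h1, h2⟩
          refine ⟨h1, fun a ha => ?_⟩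
          rintro ⟨m, hm, rfl⟩
          exact h2 m hm ha
        · rintro ⟨h1, h2⟩
          exact ⟨h1, fun m hm hmS => h2 hmS ⟨m, hm, rfl⟩⟩
      have hdisj : Disjoint ({perm d l} : Finset (Fin n)) Ml := by
        simp only [Finset.disjoint_singleton_left, hMl, Finset.mem_image, Finset.mem_filter,
          Finset.mem_univ, true_and, not_exists]
        rintro m ⟨hm, he⟩
        exact absurd ((perm d).injective he) (ne_of_gt hm)
      rw [heq, lemC x {perm d l} Ml hdisj, Finset.prod_singleton, hMl,
        Finset.prod_image (fun a _ b _ h => (perm d).injective h)]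
    rw [inner]; ring
end

section
/- The key identity behind the FLID formula: for any x ∈ [0,1]^n and nondecreasing values w_1 ≤ w_2 ≤ ... ≤ w_n ≥ 0, ∑_{S⊆{1,...,n}, S≠∅} (max_{i∈S} w_i) ∏_{i∈S} x_i ∏_{j∉S}(1−x_j) = ∑_{l=1}^n w_l x_l ∏_{m=l+1}^n (1 − x_m). -/
open Finset

/-- The key identity behind the FLID formula: for nondecreasing nonnegative weights
`w_1 ≤ ... ≤ w_n` and `x ∈ [0,1]^n`,
`∑_{∅ ≠ S ⊆ [n]} (max_{i∈S} w_i) ∏_{i∈S} x_i ∏_{j∉S}(1−x_j)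
  = ∑_l w_l x_l ∏_{m>l} (1 − x_m)`. -/
theorem flid_key_identity
    (n : ℕ) (w : Fin n → ℝ) (hw0 : ∀ i, 0 ≤ w i) (hmono : Monotone w)
    (x : Fin n → ℝ) (hx : ∀ i, x i ∈ Set.Icc (0:ℝ) 1) :
    ∑ S ∈ Finset.univ.filter (fun S : Finset (Fin n) => S.Nonempty),
        finsetMax0 S w * ((∏ i ∈ S, x i) * ∏ j ∈ Sᶜ, (1 - x j)) =
      ∑ l : Fin n, w l * x l *
        ∏ m ∈ Finset.univ.filter (fun m : Fin n => l < m), (1 - x m) := by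
  classical
  have key : ∀ l : Fin n,
      ∑ T ∈ (Finset.Iio l).powerset,
        (∏ i ∈ T, x i) * ∏ j ∈ Finset.Iio l \ T, (1 - x j) = 1 := by
    intro l
    have h := Finset.prod_add x (fun i => 1 - x i) (Finset.Iio l)
    simp only [add_sub_cancel, Finset.prod_const_one] at h
    exact h.symm
  symm
  calc ∑ l : Fin n, w l * x l * ∏ m ∈ Finset.univ.filter (fun m : Fin n => l < m), (1 - x m)
      = ∑ l : Fin n, ∑ T ∈ (Finset.Iio l).powerset,
          w l * ((x l * ∏ i ∈ T, x i) *
            ((∏ j ∈ Finset.Iio l \ T, (1 - x j)) * ∏ m ∈ Finset.Ioi l, (1 - x m))) := by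
        refine Finset.sum_congr rfl fun l _ => ?_
        have hfil : Finset.univ.filter (fun m : Fin n => l < m) = Finset.Ioi l := by
          ext m; simp
        rw [hfil]
        calc w l * x l * ∏ m ∈ Finset.Ioi l, (1 - x m)
            = (∑ T ∈ (Finset.Iio l).powerset,
                (∏ i ∈ T, x i) * ∏ j ∈ Finset.Iio l \ T, (1 - x j)) *
              (w l * x l * ∏ m ∈ Finset.Ioi l, (1 - x m)) := by rw [key l, one_mul]
          _ = _ := by rw [Finset.sum_mul]; exact Finset.sum_congr rfl fun T _ => by ring
    _ = ∑ p ∈ (Finset.univ : Finset (Fin n)).sigma (fun l => (Finset.Iio l).powerset),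
          w p.1 * ((x p.1 * ∏ i ∈ p.2, x i) *
            ((∏ j ∈ Finset.Iio p.1 \ p.2, (1 - x j)) * ∏ m ∈ Finset.Ioi p.1, (1 - x m))) := by
        rw [Finset.sum_sigma]
    _ = ∑ S ∈ Finset.univ.filter (fun S : Finset (Fin n) => S.Nonempty),
          finsetMax0 S w * ((∏ i ∈ S, x i) * ∏ j ∈ Sᶜ, (1 - x j)) := by
        refine Finset.sum_bij' (i := fun p _ => insert p.1 p.2)
          (j := fun S hS => ⟨S.max' (by simpa using hS), S.erase (S.max' (by simpa using hS))⟩)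
          ?_ ?_ ?_ ?_ ?_
        · intro p hp
          simp only [Finset.mem_filter, Finset.mem_univ, true_and]
          exact Finset.insert_nonempty _ _
        · intro S hS
          have hSne : S.Nonempty := by simpa using hS
          simp only [Finset.mem_sigma, Finset.mem_univ, true_and, Finset.mem_powerset]
          intro a ha
          rw [Finset.mem_Iio]
          rcases Finset.mem_erase.mp ha with ⟨hne, haS⟩
          exact lt_of_le_of_ne (Finset.le_max' S a haS) hne
        · intro p hp
          simp only [Finset.mem_sigma, Finset.mem_univ, true_and, Finset.mem_powerset] at hp
          have hnotmem : p.1 ∉ p.2 := fun h => by simpa using Finset.mem_Iio.mp (hp h)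
          have hmax : (insert p.1 p.2).max' (Finset.insert_nonempty _ _) = p.1 := by
            apply le_antisymm
            · apply Finset.max'_le
              intro a ha
              rcases Finset.mem_insert.mp ha with rfl | ha
              · exact le_refl _
              · exact le_of_lt (Finset.mem_Iio.mp (hp ha))
            · exact Finset.le_max' _ _ (Finset.mem_insert_self _ _)
          ext : 1
          · simp [hmax]
          · simp only [hmax]
            rw [Finset.erase_insert hnotmem]
        · intro S hS
          have hSne : S.Nonempty := by simpa using hS
          exact Finset.insert_erase (S.max'_mem hSne)
        · intro p hp
          simp only [Finset.mem_sigma, Finset.mem_univ, true_and, Finset.mem_powerset] at hp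
          have hnotmem : p.1 ∉ p.2 := fun h => by simpa using Finset.mem_Iio.mp (hp h)
          have hmaxval : finsetMax0 (insert p.1 p.2) w = w p.1 := by
            rw [finsetMax0, dif_pos (Finset.insert_nonempty _ _)]
            apply le_antisymm
            · apply Finset.sup'_le
              intro a ha
              rcases Finset.mem_insert.mp ha with rfl | ha
              · exact le_refl _
              · exact hmono (le_of_lt (Finset.mem_Iio.mp (hp ha)))
            · exact Finset.le_sup' w (Finset.mem_insert_self _ _)
          have hcompl : (insert p.1 p.2)ᶜ = (Finset.Iio p.1 \ p.2) ∪ Finset.Ioi p.1 := by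
            ext a
            simp only [Finset.mem_compl, Finset.mem_insert, Finset.mem_union, Finset.mem_sdiff,
              Finset.mem_Iio, Finset.mem_Ioi, not_or]
            constructor
            · rintro ⟨hne, hnT⟩
              rcases lt_or_gt_of_ne hne with h | h
              · exact Or.inl ⟨h, hnT⟩
              · exact Or.inr h
            · rintro (⟨hlt, hnT⟩ | hgt)
              · exact ⟨ne_of_lt hlt, hnT⟩
              · exact ⟨ne_of_gt hgt, fun h => absurd (Finset.mem_Iio.mp (hp h)) (not_lt.mpr hgt.le)⟩
          have hdisj : Disjoint (Finset.Iio p.1 \ p.2) (Finset.Ioi p.1) := by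
            apply Finset.disjoint_left.mpr
            intro a ha hb
            exact absurd (Finset.mem_Ioi.mp hb) (not_lt.mpr (le_of_lt (Finset.mem_Iio.mp (Finset.mem_sdiff.mp ha).1)))
          rw [hmaxval, hcompl, Finset.prod_union hdisj, Finset.prod_insert hnotmem]
end
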